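/- Let k be a positive integer, d an alternative, and P a profile of n votes. If Sc_D[P](d) < Sc_D[P](a) − 2k(m − 1) for every alternative a ≠ d, then for every profile R obtained from P by changing at most k votes, d is the unique Dodgson winner of R. The same statement holds with the Dodgson score Sc_D replaced throughout by the DQ score Sc_Q. -/

import Mathlib

open Finset Filter

/-- A vote (strict linear order) on `m` alternatives, encoded by its position map:
`v x` is the position of alternative `x`, position `0` being the top.
`v` ranks `x` above `y` iff `v x < v y`. -/
abbrev Vote (m : ℕ) := Equiv.Perm (Fin m)

/-- A profile is a list of `n` votes, one per agent. -/
abbrev Profile (m n : ℕ) := Fin n → Vote m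

/-- `n_{xy}[P]`: the number of votes in `P` ranking `x` above `y`. -/
def nAbove {m n : ℕ} (P : Profile m n) (x y : Fin m) : ℕ :=
  (Finset.univ.filter (fun i => P i x < P i y)).card

/-- `adv[P](x,y) = max (0, n_{xy} - n_{yx})` (truncated subtraction on `ℕ`). -/
def adv {m n : ℕ} (P : Profile m n) (x y : Fin m) : ℕ :=
  nAbove P x y - nAbove P y x

/-- The Tideman score `Sc_T[P](a) = Σ_{b ≠ a} adv[P](b,a)`. -/
def ScT {m n : ℕ} (P : Profile m n) (a : Fin m) : ℕ :=
  ∑ b ∈ Finset.univ.filter (fun b => b ≠ a), adv P b a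

/-- The Dodgson Quick score `Sc_Q[P](a) = Σ_{b ≠ a} ⌈adv[P](b,a)/2⌉`. -/
def ScQ {m n : ℕ} (P : Profile m n) (a : Fin m) : ℕ :=
  ∑ b ∈ Finset.univ.filter (fun b => b ≠ a), (adv P b a + 1) / 2

/-- `a` is a Condorcet-tie winner of `P` iff `adv[P](b,a) = 0` for all `b ≠ a`. -/
def CondorcetTieWinner {m n : ℕ} (P : Profile m n) (a : Fin m) : Prop :=
  ∀ b, b ≠ a → adv P b a = 0

/-- `a` is a Condorcet winner of `P` iff `adv[P](a,b) > 0` for all `b ≠ a`. -/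
def CondorcetWinner {m n : ℕ} (P : Profile m n) (a : Fin m) : Prop :=
  ∀ b, b ≠ a → 0 < adv P a b

/-- `w` is obtained from the vote `v` by one swap of neighbouring alternatives
(the alternatives at consecutive positions `p` and `p+1` are exchanged). -/
def AdjSwapVote {m : ℕ} (v w : Vote m) : Prop :=
  ∃ p q : Fin m, (q : ℕ) = (p : ℕ) + 1 ∧ w = v.trans (Equiv.swap p q)

/-- `Q` is obtained from the profile `P` by one adjacent swap in one vote. -/
def AdjSwap {m n : ℕ} (P Q : Profile m n) : Prop :=
  ∃ i : Fin n, AdjSwapVote (P i) (Q i) ∧ ∀ j, j ≠ i → Q j = P j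

/-- `Reach r k P Q`: `Q` can be obtained from `P` by exactly `k` steps of `r`. -/
def Reach {α : Type*} (r : α → α → Prop) : ℕ → α → α → Prop
  | 0, P, Q => P = Q
  | (k+1), P, Q => ∃ R, r P R ∧ Reach r k R Q

/-- The Dodgson score `Sc_D[P](a)`: the minimum number of adjacent swaps needed to
transform `P` into a profile in which `a` is a Condorcet-tie winner. -/
noncomputable def ScD {m n : ℕ} (P : Profile m n) (a : Fin m) : ℕ :=
  sInf {k | ∃ Q, Reach AdjSwap k P Q ∧ CondorcetTieWinner Q a}

/-- Variant of the Dodgson score requiring `a` to become a Condorcet winner. -/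
noncomputable def ScD' {m n : ℕ} (P : Profile m n) (a : Fin m) : ℕ :=
  sInf {k | ∃ Q, Reach AdjSwap k P Q ∧ CondorcetWinner Q a}

/- Voting situations: multisets of votes.  Scores depend only on the voting
situation of a profile, so we define them directly on multisets. -/

/-- Number of votes in the voting situation `S` ranking `x` above `y`. -/
def snAbove {m : ℕ} (S : Multiset (Vote m)) (x y : Fin m) : ℕ :=
  (S.filter (fun v => v x < v y)).card

def sadv {m : ℕ} (S : Multiset (Vote m)) (x y : Fin m) : ℕ :=
  snAbove S x y - snAbove S y x

/-- Tideman score of a voting situation. -/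
def sScT {m : ℕ} (S : Multiset (Vote m)) (a : Fin m) : ℕ :=
  ∑ b ∈ Finset.univ.filter (fun b => b ≠ a), sadv S b a

/-- Dodgson Quick score of a voting situation. -/
def sScQ {m : ℕ} (S : Multiset (Vote m)) (a : Fin m) : ℕ :=
  ∑ b ∈ Finset.univ.filter (fun b => b ≠ a), (sadv S b a + 1) / 2

def sCondorcetTieWinner {m : ℕ} (S : Multiset (Vote m)) (a : Fin m) : Prop :=
  ∀ b, b ≠ a → sadv S b a = 0

/-- One adjacent swap applied to one vote of a voting situation. -/
def sAdjSwap {m : ℕ} (S T : Multiset (Vote m)) : Prop :=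
  ∃ v ∈ S, ∃ w, AdjSwapVote v w ∧ T = w ::ₘ S.erase v

/-- Dodgson score of a voting situation. -/
noncomputable def sScD {m : ℕ} (S : Multiset (Vote m)) (a : Fin m) : ℕ :=
  sInf {k | ∃ T, Reach sAdjSwap k S T ∧ sCondorcetTieWinner T a}

/-- `a` is a Tideman winner (minimal Tideman score). -/
def sTWinner {m : ℕ} (S : Multiset (Vote m)) (a : Fin m) : Prop :=
  ∀ b, sScT S a ≤ sScT S b

/-- `a` is a DQ winner (minimal DQ score). -/
def sQWinner {m : ℕ} (S : Multiset (Vote m)) (a : Fin m) : Prop :=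
  ∀ b, sScQ S a ≤ sScQ S b

/-- `a` is a Dodgson winner (minimal Dodgson score). -/
def sDWinner {m : ℕ} (S : Multiset (Vote m)) (a : Fin m) : Prop :=
  ∀ b, sScD S a ≤ sScD S b

lemma reach_trans {α : Type*} {r : α → α → Prop} :
    ∀ {k l : ℕ} {P Q S : α}, Reach r k P Q → Reach r l Q S → Reach r (k + l) P S := by
  intro k
  induction k with
  | zero => intro l P Q S h h'; cases h; rw [Nat.zero_add]; exact h'
  | succ k ih =>
    intro l P Q S h h'
    obtain ⟨R, h1, h2⟩ := h
    rw [Nat.succ_add]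
    exact ⟨R, h1, ih h2 h'⟩

lemma move_to_top {m n : ℕ} (a : Fin m) :
    ∀ (c : ℕ) (P : Profile m n) (i : Fin n), (P i a : ℕ) = c →
      ∃ Q, Reach AdjSwap c P Q ∧ (Q i a : ℕ) = 0 ∧ ∀ j, j ≠ i → Q j = P j := by
  intro c
  induction c with
  | zero => intro P i h; exact ⟨P, rfl, h, fun _ _ => rfl⟩
  | succ c ih =>
    intro P i h
    have hlt : c + 1 < m := by have := (P i a).isLt; omega
    have hltc : c < m := by omega
    set p : Fin m := ⟨c, hltc⟩ with hp
    set q : Fin m := ⟨c + 1, hlt⟩ with hq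
    set v₁ : Vote m := (P i).trans (Equiv.swap p q) with hv₁
    have hqa : P i a = q := Fin.ext h
    have hv₁a : (v₁ a : ℕ) = c := by
      rw [hv₁]
      simp only [Equiv.trans_apply, hqa, Equiv.swap_apply_right]; rfl
    set P₁ := Function.update P i v₁ with hP₁def
    have hstep : AdjSwap P P₁ := by
      refine ⟨i, ⟨p, q, rfl, ?_⟩, fun j hj => Function.update_of_ne hj _ _⟩
      rw [hP₁def, Function.update_self]
    have hP₁ : (P₁ i a : ℕ) = c := by
      rw [hP₁def, Function.update_self]; exact hv₁a
    obtain ⟨Q, hr, h0, hfix⟩ := ih P₁ i hP₁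
    exact ⟨Q, ⟨P₁, hstep, hr⟩, h0,
      fun j hj => (hfix j hj).trans (Function.update_of_ne hj _ _)⟩

lemma exists_ctw {m n : ℕ} (a : Fin m) :
    ∀ (t : ℕ) (P : Profile m n), (∑ i, (P i a : ℕ)) = t →
      ∃ s Q, Reach AdjSwap s P Q ∧ CondorcetTieWinner Q a := by
  intro t
  induction t using Nat.strong_induction_on with
  | _ t ih =>
    intro P hP
    by_cases h0 : ∀ i, (P i a : ℕ) = 0
    · refine ⟨0, P, rfl, ?_⟩
      intro b hb
      have hna : nAbove P b a = 0 := by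
        rw [nAbove, Finset.card_eq_zero, Finset.filter_eq_empty_iff]
        intro i _
        have := h0 i
        simp only [not_lt, Fin.le_def]
        omega
      simp [adv, hna]
    · push_neg at h0
      obtain ⟨i, hi⟩ := h0
      obtain ⟨Q, hr, hQ0, hfix⟩ := move_to_top a ((P i a : ℕ)) P i rfl
      have e1 : (Q i a : ℕ) + ∑ j ∈ Finset.univ.erase i, (Q j a : ℕ) = ∑ j, (Q j a : ℕ) :=
        Finset.add_sum_erase _ (fun j => ((Q j a : ℕ))) (Finset.mem_univ i)
      have e2 : (P i a : ℕ) + ∑ j ∈ Finset.univ.erase i, (P j a : ℕ) = ∑ j, (P j a : ℕ) :=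
        Finset.add_sum_erase _ (fun j => ((P j a : ℕ))) (Finset.mem_univ i)
      have e3 : ∑ j ∈ Finset.univ.erase i, (Q j a : ℕ)
          = ∑ j ∈ Finset.univ.erase i, (P j a : ℕ) :=
        Finset.sum_congr rfl (fun j hj => by rw [hfix j (Finset.mem_erase.mp hj).1])
      have hsum : (∑ j, (Q j a : ℕ)) < t := by omega
      obtain ⟨s, Q', hr', hc⟩ := ih _ hsum Q rfl
      exact ⟨(P i a : ℕ) + s, Q', reach_trans hr hr', hc⟩

lemma reach_update {m n : ℕ} (i : Fin n) (v : Vote m) :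
    ∀ {s : ℕ} {P Q : Profile m n}, Reach AdjSwap s P Q →
      ∃ t ≤ s, Reach AdjSwap t (Function.update P i v) (Function.update Q i v) := by
  intro s
  induction s with
  | zero => intro P Q h; exact ⟨0, le_refl _, by cases h; rfl⟩
  | succ s ih =>
    intro P Q h
    obtain ⟨P₁, ⟨j, hsv, hfix⟩, hr⟩ := h
    obtain ⟨t, ht, hr'⟩ := ih hr
    by_cases hji : j = i
    · subst hji
      have heq : Function.update P j v = Function.update P₁ j v := by
        funext x
        by_cases hx : x = j
        · subst hx; simp
        · rw [Function.update_of_ne hx, Function.update_of_ne hx, hfix x hx]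
      exact ⟨t, by omega, heq ▸ hr'⟩
    · refine ⟨t + 1, by omega, Function.update P₁ i v, ⟨j, ?_, ?_⟩, hr'⟩
      · rwa [Function.update_of_ne hji, Function.update_of_ne hji]
      · intro x hx
        by_cases hxi : x = i
        · subst hxi; simp
        · rw [Function.update_of_ne hxi, Function.update_of_ne hxi, hfix x hx]

lemma ctw_update_top {m n : ℕ} {Q : Profile m n} {a : Fin m} (i : Fin n) (v : Vote m)
    (hv : (v a : ℕ) = 0) (h : CondorcetTieWinner Q a) :
    CondorcetTieWinner (Function.update Q i v) a := by
  intro b hb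
  have hba := h b hb
  have h1 : nAbove (Function.update Q i v) b a ≤ nAbove Q b a := by
    apply Finset.card_le_card
    intro j hj
    simp only [nAbove, Finset.mem_filter, Finset.mem_univ, true_and] at hj ⊢
    by_cases hji : j = i
    · subst hji
      rw [Function.update_self] at hj
      exfalso
      have : (v b : ℕ) < (v a : ℕ) := hj
      omega
    · rwa [Function.update_of_ne hji] at hj
  have h2 : nAbove Q a b ≤ nAbove (Function.update Q i v) a b := by
    apply Finset.card_le_card
    intro j hj
    simp only [nAbove, Finset.mem_filter, Finset.mem_univ, true_and] at hj ⊢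
    by_cases hji : j = i
    · subst hji
      rw [Function.update_self]
      have hne : v b ≠ v a := fun he => hb (v.injective he)
      have : (v b : ℕ) ≠ (v a : ℕ) := fun he => hne (Fin.ext he)
      show (v a : ℕ) < (v b : ℕ)
      omega
    · rwa [Function.update_of_ne hji]
  rw [adv] at hba ⊢
  omega

lemma scd_single {m n : ℕ} {P R : Profile m n} {i : Fin n}
    (h : ∀ j, j ≠ i → R j = P j) (a : Fin m) :
    ScD R a ≤ ScD P a + (m - 1) := by
  obtain ⟨s₀, Q₀, hr₀, hc₀⟩ := exists_ctw a _ P rfl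
  have hne : {k | ∃ Q, Reach AdjSwap k P Q ∧ CondorcetTieWinner Q a}.Nonempty :=
    ⟨s₀, Q₀, hr₀, hc₀⟩
  obtain ⟨Q, hr, hc⟩ := Nat.sInf_mem hne
  obtain ⟨R₁, hr1, h0, hfix⟩ := move_to_top a ((R i a : ℕ)) R i rfl
  set v := R₁ i with hvdef
  have hR₁ : R₁ = Function.update P i v := by
    funext x
    by_cases hx : x = i
    · subst hx; simp; exact hvdef.symm
    · rw [Function.update_of_ne hx, hfix x hx, h x hx]
  obtain ⟨t, ht, hr2⟩ := reach_update i v hr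
  have hctw : CondorcetTieWinner (Function.update Q i v) a := ctw_update_top i _ h0 hc
  have hmem : ((R i a : ℕ) + t) ∈
      {k | ∃ Q, Reach AdjSwap k R Q ∧ CondorcetTieWinner Q a} := by
    refine ⟨Function.update Q i v, reach_trans hr1 ?_, hctw⟩
    rw [hR₁]; exact hr2
  have hle := Nat.sInf_le hmem
  have hRia : (R i a : ℕ) ≤ m - 1 := by have := (R i a).isLt; omega
  have hPa : ScD P a = sInf {k | ∃ Q, Reach AdjSwap k P Q ∧ CondorcetTieWinner Q a} := rfl
  have hRa : ScD R a = sInf {k | ∃ Q, Reach AdjSwap k R Q ∧ CondorcetTieWinner Q a} := rfl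
  omega

lemma scd_changes {m n : ℕ} :
    ∀ (k : ℕ) (P R : Profile m n),
      (Finset.univ.filter (fun i => R i ≠ P i)).card ≤ k →
      ∀ a, ScD R a ≤ ScD P a + k * (m - 1) := by
  intro k
  induction k with
  | zero =>
    intro P R h a
    have hRP : R = P := by
      funext i
      by_contra hi
      have hmem : i ∈ Finset.univ.filter (fun i => R i ≠ P i) := by
        simp [hi]
      have := Finset.card_pos.mpr ⟨i, hmem⟩
      omega
    rw [hRP]; simp
  | succ k ih =>
    intro P R h a
    by_cases hP : R = P
    · rw [hP]; omega
    · have hex : ∃ i, R i ≠ P i := by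
        by_contra h'
        push_neg at h'
        exact hP (funext h')
      obtain ⟨i, hi⟩ := hex
      set P' := Function.update P i (R i) with hP'def
      have h1 : (Finset.univ.filter (fun j => R j ≠ P' j)).card ≤ k := by
        have hsub : Finset.univ.filter (fun j => R j ≠ P' j) ⊆
            (Finset.univ.filter (fun j => R j ≠ P j)).erase i := by
          intro j hj
          simp only [Finset.mem_filter, Finset.mem_univ, true_and, Finset.mem_erase] at hj ⊢
          have hji : j ≠ i := by
            intro he; subst he
            exact hj (by rw [hP'def, Function.update_self])
          exact ⟨hji, by rwa [hP'def, Function.update_of_ne hji] at hj⟩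
        have hc1 := Finset.card_le_card hsub
        have hc2 := Finset.card_erase_of_mem
          (show i ∈ Finset.univ.filter (fun j => R j ≠ P j) by simp [hi])
        omega
      have h2 := ih P' R h1 a
      have h3 : ScD P' a ≤ ScD P a + (m - 1) :=
        scd_single (fun j hj => by rw [hP'def, Function.update_of_ne hj]) a
      have : (k + 1) * (m - 1) = k * (m - 1) + (m - 1) := by ring
      omega

lemma nAbove_le {m n : ℕ} (P R : Profile m n) (x y : Fin m) :
    nAbove R x y ≤ nAbove P x y + (Finset.univ.filter (fun i => R i ≠ P i)).card := by
  rw [nAbove, nAbove]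
  have hsub : Finset.univ.filter (fun i => R i x < R i y) ⊆
      Finset.univ.filter (fun i => P i x < P i y) ∪
        Finset.univ.filter (fun i => R i ≠ P i) := by
    intro i hi
    simp only [Finset.mem_filter, Finset.mem_union, Finset.mem_univ, true_and] at hi ⊢
    by_cases hR : R i = P i
    · left; rwa [hR] at hi
    · right; exact hR
  calc _ ≤ _ := Finset.card_le_card hsub
    _ ≤ _ := Finset.card_union_le _ _

lemma scq_changes {m n : ℕ} (k : ℕ) (P R : Profile m n)
    (h : (Finset.univ.filter (fun i => R i ≠ P i)).card ≤ k) (a : Fin m) :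
    ScQ R a ≤ ScQ P a + k * (m - 1) := by
  have hfe : (Finset.univ.filter (fun i => P i ≠ R i))
      = (Finset.univ.filter (fun i => R i ≠ P i)) := by
    ext i
    simp only [Finset.mem_filter, Finset.mem_univ, true_and]
    exact ne_comm
  have hcard : (Finset.univ.filter (fun b : Fin m => b ≠ a)).card = m - 1 := by
    rw [Finset.filter_ne', Finset.card_erase_of_mem (Finset.mem_univ a), Finset.card_univ,
      Fintype.card_fin]
  rw [ScQ, ScQ]
  calc ∑ b ∈ Finset.univ.filter (fun b => b ≠ a), (adv R b a + 1) / 2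
      ≤ ∑ b ∈ Finset.univ.filter (fun b => b ≠ a), ((adv P b a + 1) / 2 + k) := by
        apply Finset.sum_le_sum
        intro b _
        have h1 := nAbove_le P R b a
        have h2 := nAbove_le R P a b
        rw [hfe] at h2
        rw [adv, adv]
        omega
    _ = (∑ b ∈ Finset.univ.filter (fun b => b ≠ a), (adv P b a + 1) / 2) + (m - 1) * k := by
        rw [Finset.sum_add_distrib, Finset.sum_const, hcard, smul_eq_mul]
    _ = _ := by ring

/-- If in `P` the alternative `d` has Dodgson score more than `2k(m−1)` below that
of every other alternative, then `d` remains the unique Dodgson winner of every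
profile obtained from `P` by changing at most `k` votes; and likewise with the
Dodgson score replaced throughout by the DQ score. -/
theorem stmt_13 {m n : ℕ} (hm : 2 ≤ m) (k : ℕ) (hk : 1 ≤ k) (d : Fin m)
    (P : Profile m n) :
    ((∀ a, a ≠ d → (ScD P d : ℤ) < (ScD P a : ℤ) - 2 * (k : ℤ) * ((m : ℤ) - 1)) →
      ∀ R : Profile m n,
        (Finset.univ.filter (fun i => R i ≠ P i)).card ≤ k →
        ∀ a, a ≠ d → ScD R d < ScD R a) ∧
    ((∀ a, a ≠ d → (ScQ P d : ℤ) < (ScQ P a : ℤ) - 2 * (k : ℤ) * ((m : ℤ) - 1)) →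
      ∀ R : Profile m n,
        (Finset.univ.filter (fun i => R i ≠ P i)).card ≤ k →
        ∀ a, a ≠ d → ScQ R d < ScQ R a) := by
  have hcast : ((m - 1 : ℕ) : ℤ) = (m : ℤ) - 1 := by
    have : 1 ≤ m := by omega
    push_cast [this]
    ring
  constructor
  · intro hyp R hR a ha
    have h1 := scd_changes k P R hR d
    have h2 : ScD P a ≤ ScD R a + k * (m - 1) := by
      apply scd_changes k R P _ a
      rw [show (Finset.univ.filter (fun i => P i ≠ R i))
          = (Finset.univ.filter (fun i => R i ≠ P i)) from by
        ext i; simp only [Finset.mem_filter, Finset.mem_univ, true_and]; exact ne_comm]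
      exact hR
    have h3 := hyp a ha
    have hc1 : ((k * (m - 1) : ℕ) : ℤ) = (k : ℤ) * ((m : ℤ) - 1) := by
      push_cast [hcast]; ring
    have h1' : (ScD R d : ℤ) ≤ (ScD P d : ℤ) + (k : ℤ) * ((m : ℤ) - 1) := by
      have := (Nat.cast_le (α := ℤ)).mpr h1
      push_cast at this ⊢
      rw [hcast] at this
      linarith
    have h2' : (ScD P a : ℤ) ≤ (ScD R a : ℤ) + (k : ℤ) * ((m : ℤ) - 1) := by
      have := (Nat.cast_le (α := ℤ)).mpr h2
      push_cast at this ⊢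
      rw [hcast] at this
      linarith
    have : (ScD R d : ℤ) < (ScD R a : ℤ) := by linarith
    exact_mod_cast this
  · intro hyp R hR a ha
    have h1 := scq_changes k P R hR d
    have h2 : ScQ P a ≤ ScQ R a + k * (m - 1) := by
      apply scq_changes k R P _ a
      rw [show (Finset.univ.filter (fun i => P i ≠ R i))
          = (Finset.univ.filter (fun i => R i ≠ P i)) from by
        ext i; simp only [Finset.mem_filter, Finset.mem_univ, true_and]; exact ne_comm]
      exact hR
    have h3 := hyp a ha
    have h1' : (ScQ R d : ℤ) ≤ (ScQ P d : ℤ) + (k : ℤ) * ((m : ℤ) - 1) := by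
      have := (Nat.cast_le (α := ℤ)).mpr h1
      push_cast at this ⊢
      rw [hcast] at this
      linarith
    have h2' : (ScQ P a : ℤ) ≤ (ScQ R a : ℤ) + (k : ℤ) * ((m : ℤ) - 1) := by
      have := (Nat.cast_le (α := ℤ)).mpr h2
      push_cast at this ⊢
      rw [hcast] at this
      linarith
    have : (ScQ R d : ℤ) < (ScQ R a : ℤ) := by linarith
    exact_mod_cast this
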